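/- There exists exactly one real number λ in the interval (1, σ] satisfying the equation 1/(σ−1) = Σ_{n≥1} λ^{−n} (Mⁿ)(w*,w*), where Mⁿ is the n-th matrix power of M; moreover the mean fitness of any quasispecies solution for the sharp peak fitness function satisfies this equation. -/

import Mathlib

open scoped BigOperators
open Finset Filter

private lemma matpow_facts {E : Type*} [Fintype E] [DecidableEq E]
    (M : Matrix E E ℝ) (h0 : ∀ u v, 0 ≤ M u v) (h1 : ∀ u, ∑ v, M u v = 1) :
    ∀ n : ℕ, (∀ u v, 0 ≤ (M ^ n) u v) ∧ (∀ u, ∑ v, (M ^ n) u v = 1) := by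
  intro n
  induction n with
  | zero =>
    refine ⟨fun u v => ?_, fun u => ?_⟩
    · simp only [pow_zero, Matrix.one_apply]
      split <;> norm_num
    · simp [pow_zero, Matrix.one_apply]
  | succ n ih =>
    refine ⟨fun u v => ?_, fun u => ?_⟩
    · rw [pow_succ, Matrix.mul_apply]
      exact sum_nonneg fun w _ => mul_nonneg (ih.1 u w) (h0 w v)
    · simp only [pow_succ, Matrix.mul_apply]
      rw [Finset.sum_comm]
      have h : ∀ w : E, ∑ v, (M ^ n) u w * M w v = (M ^ n) u w := by
        intro w; rw [← Finset.mul_sum, h1 w, mul_one]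
      simp only [h]
      exact ih.2 u

private lemma matpow_le_one {E : Type*} [Fintype E] [DecidableEq E]
    (M : Matrix E E ℝ) (h0 : ∀ u v, 0 ≤ M u v) (h1 : ∀ u, ∑ v, M u v = 1)
    (n : ℕ) (u v : E) : (M ^ n) u v ≤ 1 := by
  have h := matpow_facts M h0 h1 n
  calc (M ^ n) u v ≤ ∑ w, (M ^ n) u w :=
        Finset.single_le_sum (fun w _ => h.1 u w) (mem_univ v)
    _ = 1 := h.2 u

private lemma summable_series (lam : ℝ) (hlam : 1 < lam) (p : ℕ → ℝ)
    (hp0 : ∀ n, 0 ≤ p n) (hp1 : ∀ n, p n ≤ 1) :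
    Summable fun n => (lam ^ (n + 1))⁻¹ * p n := by
  have h0 : (0:ℝ) < lam := by linarith
  have hinv : lam⁻¹ < 1 := inv_lt_one_of_one_lt₀ hlam
  refine Summable.of_nonneg_of_le (fun n => mul_nonneg (by positivity) (hp0 n)) (fun n => ?_)
    (summable_geometric_of_lt_one (by positivity) hinv)
  calc (lam ^ (n+1))⁻¹ * p n ≤ (lam ^ (n+1))⁻¹ * 1 :=
        mul_le_mul_of_nonneg_left (hp1 n) (by positivity)
    _ = (lam⁻¹) ^ (n+1) := by rw [mul_one, inv_pow]
    _ ≤ (lam⁻¹) ^ n := pow_le_pow_of_le_one (by positivity) hinv.le (Nat.le_succ n)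

private lemma tsum_geom_succ (lam : ℝ) (hlam : 1 < lam) :
    ∑' n : ℕ, (lam ^ (n+1))⁻¹ = (lam - 1)⁻¹ := by
  have h0 : (0:ℝ) < lam := by linarith
  have hinv : lam⁻¹ < 1 := inv_lt_one_of_one_lt₀ hlam
  have : (fun n : ℕ => (lam ^ (n+1))⁻¹) = fun n : ℕ => lam⁻¹ * (lam⁻¹) ^ n := by
    funext n; rw [pow_succ', mul_inv, inv_pow]
  rw [this, tsum_mul_left, tsum_geometric_of_lt_one (by positivity) hinv]
  rw [inv_mul_eq_div, div_eq_inv_mul, ← mul_inv]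
  congr 1
  field_simp

theorem mean_fitness_equation_sharp_peak
    (E : Type*) [Fintype E] [DecidableEq E] [Nonempty E]
    (M : Matrix E E ℝ) (hMpos : ∀ u v, 0 < M u v) (hMrow : ∀ u, ∑ v, M u v = 1)
    (σ : ℝ) (hσ : 1 < σ) (wstar : E)
    (f : E → ℝ) (hf : ∀ u, f u = if u = wstar then σ else 1) :
    (∃! lam : ℝ, lam ∈ Set.Ioc 1 σ ∧
        1 / (σ - 1) = ∑' n : ℕ, (lam ^ (n + 1))⁻¹ * (M ^ (n + 1)) wstar wstar) ∧
      (∀ x : E → ℝ, (∀ u, 0 ≤ x u) → (∑ u, x u) = 1 →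
        (∀ u, x u * (∑ v, x v * f v) = ∑ v, x v * f v * M v u) →
        (∑ v, x v * f v) ∈ Set.Ioc 1 σ ∧
          1 / (σ - 1) =
            ∑' n : ℕ, ((∑ v, x v * f v) ^ (n + 1))⁻¹ * (M ^ (n + 1)) wstar wstar) := by
  have hM0 : ∀ u v, 0 ≤ M u v := fun u v => (hMpos u v).le
  -- abbreviations
  set p : ℕ → ℝ := fun n => (M ^ (n+1)) wstar wstar with hp
  have hp0 : ∀ n, 0 ≤ p n := fun n => (matpow_facts M hM0 hMrow (n+1)).1 wstar wstar
  have hp1 : ∀ n, p n ≤ 1 := fun n => matpow_le_one M hM0 hMrow (n+1) wstar wstar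
  -- a uniform positive lower bound c for the entries of M
  obtain ⟨c, hc0, hc⟩ : ∃ c : ℝ, 0 < c ∧ ∀ u v, c ≤ M u v := by
    refine ⟨(Finset.univ : Finset (E × E)).inf' (univ_nonempty) (fun q => M q.1 q.2), ?_, ?_⟩
    · obtain ⟨q, _, hq⟩ := Finset.exists_mem_eq_inf' (univ_nonempty)
        (fun q : E × E => M q.1 q.2)
      rw [hq]; exact hMpos q.1 q.2
    · intro u v; exact Finset.inf'_le _ (mem_univ (u, v))
  have hcp : ∀ n, c ≤ p n := by
    intro n
    have : (M ^ (n+1)) wstar wstar = ∑ w, (M ^ n) wstar w * M w wstar := by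
      rw [pow_succ, Matrix.mul_apply]
    rw [hp]; dsimp only; rw [this]
    calc c = ∑ w, (M ^ n) wstar w * c := by
          rw [← Finset.sum_mul, (matpow_facts M hM0 hMrow n).2 wstar, one_mul]
      _ ≤ ∑ w, (M ^ n) wstar w * M w wstar :=
          Finset.sum_le_sum fun w _ =>
            mul_le_mul_of_nonneg_left (hc w wstar) ((matpow_facts M hM0 hMrow n).1 wstar w)
  have hc1 : c ≤ 1 := le_trans (hc wstar wstar) (by
    calc M wstar wstar ≤ ∑ v, M wstar v :=
          Finset.single_le_sum (fun v _ => hM0 wstar v) (mem_univ wstar)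
      _ = 1 := hMrow wstar)
  -- the function G
  set G : ℝ → ℝ := fun lam => ∑' n : ℕ, (lam ^ (n + 1))⁻¹ * p n with hG
  have hσ1 : (0:ℝ) < σ - 1 := by linarith
  -- G is strictly decreasing on (1, ∞)
  have hanti : ∀ a b : ℝ, 1 < a → a < b → G b < G a := by
    intro a b ha hab
    have hb : 1 < b := lt_trans ha hab
    refine Summable.tsum_lt_tsum (i := 0) (fun n => ?_) ?_
      (summable_series b hb p hp0 hp1) (summable_series a ha p hp0 hp1)
    · apply mul_le_mul_of_nonneg_right _ (hp0 n)
      apply inv_anti₀ (by positivity)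
      exact pow_le_pow_left₀ (by linarith) hab.le _
    · have hpa : 0 < p 0 := lt_of_lt_of_le hc0 (hcp 0)
      apply mul_lt_mul_of_pos_right _ hpa
      have hpow : a ^ (0+1) < b ^ (0+1) :=
        pow_lt_pow_left₀ hab (by linarith) (by norm_num)
      exact inv_strictAnti₀ (by positivity) hpow
  -- Part 1: existence via IVT
  set lam0 : ℝ := 1 + c * (σ - 1) with hlam0
  have hlam0_gt : 1 < lam0 := by nlinarith
  have hlam0_le : lam0 ≤ σ := by nlinarith
  have hGcont : ContinuousOn G (Set.Icc lam0 σ) := by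
    have : ContinuousOn G (Set.Ici lam0) := by
      rw [continuousOn_iff_continuous_restrict]
      have : (Set.Ici lam0).domRestrict G =
          fun l : Set.Ici lam0 => ∑' n : ℕ, ((l : ℝ) ^ (n + 1))⁻¹ * p n := rfl
      rw [this]
      apply continuous_tsum (u := fun n : ℕ => (lam0⁻¹) ^ n)
      · intro n
        refine Continuous.mul (Continuous.inv₀ (by fun_prop) ?_) continuous_const
        intro l
        have : (0:ℝ) < (l:ℝ) := lt_of_lt_of_le (by linarith) l.2
        positivity
      · exact summable_geometric_of_lt_one (by positivity)
          (inv_lt_one_of_one_lt₀ hlam0_gt)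
      · intro n l
        have hl : lam0 ≤ (l : ℝ) := l.2
        have hl0 : (0:ℝ) < (l:ℝ) := by linarith
        rw [Real.norm_eq_abs, abs_of_nonneg (mul_nonneg (by positivity) (hp0 n))]
        calc ((l:ℝ) ^ (n+1))⁻¹ * p n ≤ ((l:ℝ) ^ (n+1))⁻¹ * 1 :=
              mul_le_mul_of_nonneg_left (hp1 n) (by positivity)
          _ = (((l:ℝ) ^ (n+1))⁻¹) := mul_one _
          _ ≤ (lam0 ^ n)⁻¹ := by
              apply inv_anti₀ (by positivity)
              calc lam0 ^ n ≤ lam0 ^ (n+1) :=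
                    pow_le_pow_right₀ (by linarith) (Nat.le_succ n)
                _ ≤ (l:ℝ) ^ (n+1) := pow_le_pow_left₀ (by linarith) hl _
          _ = (lam0⁻¹) ^ n := by rw [inv_pow]
    exact this.mono (fun y hy => hy.1)
  have hGσ : G σ ≤ 1 / (σ - 1) := by
    have := Summable.tsum_le_tsum (f := fun n : ℕ => (σ ^ (n+1))⁻¹ * p n)
      (g := fun n : ℕ => (σ ^ (n+1))⁻¹)
      (fun n => by
        calc (σ ^ (n+1))⁻¹ * p n ≤ (σ ^ (n+1))⁻¹ * 1 :=
              mul_le_mul_of_nonneg_left (hp1 n) (by positivity)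
          _ = (σ ^ (n+1))⁻¹ := mul_one _)
      (summable_series σ hσ p hp0 hp1)
      (by
        have := summable_series σ hσ (fun _ => 1) (fun _ => zero_le_one) (fun _ => le_refl 1)
        simpa using this)
    rw [hG]; dsimp only
    calc (∑' n : ℕ, (σ ^ (n+1))⁻¹ * p n) ≤ ∑' n : ℕ, (σ ^ (n+1))⁻¹ := this
      _ = (σ - 1)⁻¹ := tsum_geom_succ σ hσ
      _ = 1 / (σ - 1) := (one_div _).symm
  have hGlam0 : 1 / (σ - 1) ≤ G lam0 := by
    have := Summable.tsum_le_tsum (f := fun n : ℕ => (lam0 ^ (n+1))⁻¹ * c)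
      (g := fun n : ℕ => (lam0 ^ (n+1))⁻¹ * p n)
      (fun n => mul_le_mul_of_nonneg_left (hcp n) (by positivity))
      (by
        have := summable_series lam0 hlam0_gt (fun _ => c) (fun _ => hc0.le) (fun _ => hc1)
        simpa using this)
      (summable_series lam0 hlam0_gt p hp0 hp1)
    have hsum : (∑' n : ℕ, (lam0 ^ (n+1))⁻¹ * c) = (lam0 - 1)⁻¹ * c := by
      rw [tsum_mul_right, tsum_geom_succ lam0 hlam0_gt]
    rw [hG]; dsimp only
    calc 1 / (σ - 1) = (lam0 - 1)⁻¹ * c := by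
          rw [hlam0]; field_simp; ring
      _ = ∑' n : ℕ, (lam0 ^ (n+1))⁻¹ * c := hsum.symm
      _ ≤ ∑' n : ℕ, (lam0 ^ (n+1))⁻¹ * p n := this
  obtain ⟨lam, hlammem, hlamval⟩ :=
    intermediate_value_Icc' hlam0_le hGcont ⟨hGσ, hGlam0⟩
  have part1 : ∃! lam : ℝ, lam ∈ Set.Ioc 1 σ ∧
      1 / (σ - 1) = ∑' n : ℕ, (lam ^ (n + 1))⁻¹ * (M ^ (n + 1)) wstar wstar := by
    refine ⟨lam, ⟨⟨lt_of_lt_of_le hlam0_gt hlammem.1, hlammem.2⟩, hlamval.symm⟩, ?_⟩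
    intro y hy
    have h2 : G y = 1 / (σ - 1) := hy.2.symm
    by_contra hne
    rcases lt_or_gt_of_ne hne with h | h
    · have hlt := hanti y lam hy.1.1 h
      rw [h2, hlamval] at hlt; exact lt_irrefl _ hlt
    · have hlt := hanti lam y (lt_of_lt_of_le hlam0_gt hlammem.1) h
      rw [h2, hlamval] at hlt; exact lt_irrefl _ hlt
  refine ⟨part1, ?_⟩
  -- Part 2
  intro x hx0 hxsum hxeq
  set lm : ℝ := ∑ v, x v * f v with hlm
  have hxf : ∀ v, x v * f v = x v + (if v = wstar then (σ - 1) * x wstar else 0) := by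
    intro v
    rw [hf v]
    split
    · rename_i hv; subst hv; ring
    · ring
  have hlmval : lm = 1 + (σ - 1) * x wstar := by
    rw [hlm]
    simp only [hxf]
    rw [Finset.sum_add_distrib, hxsum, Finset.sum_ite_eq' univ wstar]
    simp
  have hxw_le : x wstar ≤ 1 := by
    rw [← hxsum]
    exact Finset.single_le_sum (fun v _ => hx0 v) (mem_univ wstar)
  have hf1 : ∀ v, 1 ≤ f v := by
    intro v; rw [hf v]; split <;> linarith
  have hxwpos : 0 < x wstar := by
    rcases lt_or_eq_of_le (hx0 wstar) with h | h
    · exact h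
    have hlm1 : lm = 1 := by rw [hlmval, ← h]; ring
    have heq := hxeq wstar
    rw [hlm1, ← h] at heq
    have : c ≤ ∑ v, x v * f v * M v wstar := by
      calc c = ∑ v, x v * c := by rw [← Finset.sum_mul, hxsum, one_mul]
        _ ≤ ∑ v, x v * f v * M v wstar := by
            apply Finset.sum_le_sum
            intro v _
            calc x v * c ≤ x v * M v wstar :=
                  mul_le_mul_of_nonneg_left (hc v wstar) (hx0 v)
              _ ≤ x v * f v * M v wstar := by
                  apply mul_le_mul_of_nonneg_right _ (hM0 v wstar)
                  nlinarith [hx0 v, hf1 v]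
    rw [← heq] at this
    linarith
  have hlm_gt : 1 < lm := by rw [hlmval]; nlinarith
  have hlm_le : lm ≤ σ := by rw [hlmval]; nlinarith
  have hlm0 : (0:ℝ) < lm := by linarith
  -- the vector recursion
  have hvec : ∀ w, ∑ v, x v * M v w = lm * x w - (lm - 1) * M wstar w := by
    intro w
    have heq := hxeq w
    have : ∑ v, x v * f v * M v w = (∑ v, x v * M v w) + (σ - 1) * x wstar * M wstar w := by
      calc ∑ v, x v * f v * M v w
          = ∑ v, (x v * M v w + (if v = wstar then (σ - 1) * x wstar * M v w else 0)) := by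
            apply Finset.sum_congr rfl
            intro v _
            rw [hxf v]
            split <;> ring
        _ = (∑ v, x v * M v w) + (σ - 1) * x wstar * M wstar w := by
            rw [Finset.sum_add_distrib, Finset.sum_ite_eq' univ wstar]
            simp
    rw [this] at heq
    have : lm - 1 = (σ - 1) * x wstar := by rw [hlmval]; ring
    rw [this]
    linarith [heq]
  -- the key identity by induction
  set S : ℕ → ℝ := fun N => ∑ v, x v * (M ^ N) v wstar with hS
  have hSrec : ∀ N, S (N + 1) = lm * S N - (lm - 1) * (M ^ (N+1)) wstar wstar := by
    intro N
    have h1 : S (N + 1) = ∑ w, (∑ v, x v * M v w) * (M ^ N) w wstar := by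
      rw [hS]
      dsimp only
      have hmm : ∀ v, (M ^ (N+1)) v wstar = ∑ w, M v w * (M ^ N) w wstar := by
        intro v; rw [pow_succ', Matrix.mul_apply]
      simp only [hmm, Finset.mul_sum]
      rw [Finset.sum_comm]
      apply Finset.sum_congr rfl
      intro w _
      rw [Finset.sum_mul]
      apply Finset.sum_congr rfl
      intro v _; ring
    rw [h1]
    have h2 : (M ^ (N+1)) wstar wstar = ∑ w, M wstar w * (M ^ N) w wstar := by
      rw [pow_succ', Matrix.mul_apply]
    rw [h2]
    simp only [hvec]
    rw [hS]
    dsimp only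
    rw [Finset.mul_sum, Finset.mul_sum, ← Finset.sum_sub_distrib]
    apply Finset.sum_congr rfl
    intro w _; ring
  have hkey : ∀ N : ℕ, x wstar = (lm ^ N)⁻¹ * S N
      + (lm - 1) * ∑ n ∈ Finset.range N, (lm ^ (n+1))⁻¹ * p n := by
    intro N
    induction N with
    | zero =>
      simp only [pow_zero, inv_one, one_mul, Finset.range_zero, Finset.sum_empty, mul_zero,
        add_zero, hS]
      simp [Matrix.one_apply]
    | succ N ih =>
      rw [Finset.sum_range_succ]
      have hlmN : (0:ℝ) < lm ^ N := by positivity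
      have hstep : (lm ^ (N+1))⁻¹ * S (N+1)
          = (lm ^ N)⁻¹ * S N - (lm - 1) * ((lm ^ (N+1))⁻¹ * p N) := by
        rw [hSrec N, hp]
        dsimp only
        rw [pow_succ]
        field_simp
      rw [hstep, ih]
      ring
  -- limits
  have hSbound : ∀ N, 0 ≤ S N ∧ S N ≤ 1 := by
    intro N
    constructor
    · exact Finset.sum_nonneg fun v _ =>
        mul_nonneg (hx0 v) ((matpow_facts M hM0 hMrow N).1 v wstar)
    · calc S N ≤ ∑ v, x v * 1 := Finset.sum_le_sum fun v _ =>
            mul_le_mul_of_nonneg_left (matpow_le_one M hM0 hMrow N v wstar) (hx0 v)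
        _ = 1 := by simp only [mul_one]; exact hxsum
  have hT0 : Tendsto (fun N => (lm ^ N)⁻¹ * S N) atTop (nhds 0) := by
    apply squeeze_zero (fun N => mul_nonneg (by positivity) (hSbound N).1)
      (g := fun N => (lm⁻¹) ^ N)
    · intro N
      calc (lm ^ N)⁻¹ * S N ≤ (lm ^ N)⁻¹ * 1 :=
            mul_le_mul_of_nonneg_left (hSbound N).2 (by positivity)
        _ = (lm⁻¹) ^ N := by rw [mul_one, inv_pow]
    · exact tendsto_pow_atTop_nhds_zero_of_lt_one (by positivity)
        (inv_lt_one_of_one_lt₀ hlm_gt)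
  have hlm1ne : lm - 1 ≠ 0 := by linarith
  have hpartial : Tendsto (fun N => ∑ n ∈ Finset.range N, (lm ^ (n+1))⁻¹ * p n)
      atTop (nhds (x wstar / (lm - 1))) := by
    have heqfun : (fun N => ∑ n ∈ Finset.range N, (lm ^ (n+1))⁻¹ * p n)
        = fun N => (x wstar - (lm ^ N)⁻¹ * S N) / (lm - 1) := by
      funext N
      have h := hkey N
      rw [eq_div_iff hlm1ne]
      linear_combination -h
    rw [heqfun]
    have : Tendsto (fun N => (x wstar - (lm ^ N)⁻¹ * S N)) atTop (nhds (x wstar - 0)) :=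
      (tendsto_const_nhds).sub hT0
    rw [sub_zero] at this
    exact this.div_const (lm - 1)
  have hsumm := summable_series lm hlm_gt p hp0 hp1
  have htsum : (∑' n : ℕ, (lm ^ (n+1))⁻¹ * p n) = x wstar / (lm - 1) :=
    tendsto_nhds_unique hsumm.hasSum.tendsto_sum_nat hpartial
  have hxwval : x wstar = (lm - 1) / (σ - 1) := by
    rw [hlmval]; field_simp; ring
  refine ⟨⟨hlm_gt, hlm_le⟩, ?_⟩
  show (1 : ℝ) / (σ - 1) = ∑' n : ℕ, (lm ^ (n + 1))⁻¹ * p n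
  rw [htsum, hxwval]
  field_simp
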